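/- Let r and m be integers with 7 ≤ r < m - 3, let k1 be a nonnegative integer, and let k3 be an integer with -5 ≤ k3 ≤ r - 6 such that k1(m-2) + k3 ≥ 0. If it is not the case that both -5 ≤ k3 ≤ -1 and k1 ≤ |k3| - 1, then there exist integers x_1, ..., x_{r-1} with ∑_{j=1}^{r-1} P_m(x_j) = k1(m-2) + k3; i.e., k1(m-2) + k3 is a sum of at most r-1 generalized m-gonal numbers. -/

import Mathlib

/-- The `x`-th generalized `m`-gonal number `P_m(x) = ((m-2)x² - (m-4)x)/2`. -/
def polygonal (m : ℕ) (x : ℤ) : ℤ := (((m : ℤ) - 2) * x ^ 2 - ((m : ℤ) - 4) * x) / 2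

namespace SplitUniversalAux

def Q2 (a b c y z : ℤ) : ℤ := a*y^2 + 2*b*y*z + c*z^2
def Q3 (A B C D E F x y z : ℤ) : ℤ := A*x^2 + B*y^2 + C*z^2 + 2*(D*y*z + E*x*z + F*x*y)
def B3 (A B C D E F a b c x y z : ℤ) : ℤ :=
  A*a*x + B*b*y + C*c*z + D*(b*z+c*y) + E*(a*z+c*x) + F*(a*y+b*x)
def det3 (A B C D E F : ℤ) : ℤ := A*B*C + 2*D*E*F - A*D^2 - B*E^2 - C*F^2

set_option maxHeartbeats 2000000 in
lemma transform_det3 (A B C D E F u1 u2 u3 v1 v2 v3 w1 w2 w3 : ℤ) :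
    det3 (Q3 A B C D E F u1 u2 u3) (Q3 A B C D E F v1 v2 v3) (Q3 A B C D E F w1 w2 w3)
      (B3 A B C D E F v1 v2 v3 w1 w2 w3) (B3 A B C D E F u1 u2 u3 w1 w2 w3)
      (B3 A B C D E F u1 u2 u3 v1 v2 v3)
    = (u1*(v2*w3-v3*w2) - u2*(v1*w3-v3*w1) + u3*(v1*w2-v2*w1))^2 * det3 A B C D E F := by
  unfold det3 Q3 B3; ring

lemma transform_Q3 (A B C D E F u1 u2 u3 v1 v2 v3 w1 w2 w3 s t u : ℤ) :
    Q3 (Q3 A B C D E F u1 u2 u3) (Q3 A B C D E F v1 v2 v3) (Q3 A B C D E F w1 w2 w3)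
      (B3 A B C D E F v1 v2 v3 w1 w2 w3) (B3 A B C D E F u1 u2 u3 w1 w2 w3)
      (B3 A B C D E F u1 u2 u3 v1 v2 v3) s t u
    = Q3 A B C D E F (u1*s+v1*t+w1*u) (u2*s+v2*t+w2*u) (u3*s+v3*t+w3*u) := by
  unfold Q3 B3; ring

/-- Extract a primitive vector from a nonzero integer vector. -/
lemma exists_primitive (x y z : ℤ) (h : ¬(x = 0 ∧ y = 0 ∧ z = 0)) :
    ∃ g p q r : ℤ, 0 < g ∧ x = g*p ∧ y = g*q ∧ z = g*r ∧
      Int.gcd (Int.gcd p q) r = 1 := by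
  set G : ℕ := Int.gcd (Int.gcd x y) z with hG
  have hG0 : G ≠ 0 := by
    intro h0
    obtain ⟨h2, h3⟩ := Int.gcd_eq_zero_iff.mp h0
    have h4 : Int.gcd x y = 0 := by exact_mod_cast h2
    obtain ⟨h5, h6⟩ := Int.gcd_eq_zero_iff.mp h4
    exact h ⟨h5, h6, h3⟩
  have hGpos : 0 < (G:ℤ) := by exact_mod_cast Nat.pos_of_ne_zero hG0
  have hdx : (G:ℤ) ∣ x := dvd_trans (Int.gcd_dvd_left _ _) (Int.gcd_dvd_left _ _)
  have hdy : (G:ℤ) ∣ y := dvd_trans (Int.gcd_dvd_left _ _) (Int.gcd_dvd_right _ _)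
  have hdz : (G:ℤ) ∣ z := Int.gcd_dvd_right _ _
  refine ⟨G, x / G, y / G, z / G, hGpos, (Int.mul_ediv_cancel' hdx).symm,
    (Int.mul_ediv_cancel' hdy).symm, (Int.mul_ediv_cancel' hdz).symm, ?_⟩
  set d : ℕ := Int.gcd (Int.gcd (x / G) (y / G)) (z / G) with hd
  have hdvd : (G:ℤ) * d ∣ (G:ℤ) * 1 := by
    rw [mul_one]
    have h1 : (d:ℤ) ∣ x / G := dvd_trans (Int.gcd_dvd_left _ _) (Int.gcd_dvd_left _ _)
    have h2 : (d:ℤ) ∣ y / G := dvd_trans (Int.gcd_dvd_left _ _) (Int.gcd_dvd_right _ _)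
    have h3 : (d:ℤ) ∣ z / G := Int.gcd_dvd_right _ _
    have hx' : (G:ℤ) * d ∣ x := by
      calc (G:ℤ) * d ∣ (G:ℤ) * (x / G) := mul_dvd_mul_left _ h1
        _ = x := Int.mul_ediv_cancel' hdx
    have hy' : (G:ℤ) * d ∣ y := by
      calc (G:ℤ) * d ∣ (G:ℤ) * (y / G) := mul_dvd_mul_left _ h2
        _ = y := Int.mul_ediv_cancel' hdy
    have hz' : (G:ℤ) * d ∣ z := by
      calc (G:ℤ) * d ∣ (G:ℤ) * (z / G) := mul_dvd_mul_left _ h3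
        _ = z := Int.mul_ediv_cancel' hdz
    exact Int.dvd_coe_gcd (Int.dvd_coe_gcd hx' hy') hz'
  have hd1 : (d:ℤ) ∣ 1 := (mul_dvd_mul_iff_left hGpos.ne').mp hdvd
  exact_mod_cast Int.eq_one_of_dvd_one (by positivity) hd1

/-- Completion of a primitive vector to a unimodular matrix (as two more columns). -/
lemma completion3 (p q r : ℤ) (h : Int.gcd (Int.gcd p q) r = 1) :
    ∃ v1 v2 v3 w1 w2 w3 : ℤ,
      p*(v2*w3-v3*w2) - q*(v1*w3-v3*w1) + r*(v1*w2-v2*w1) = 1 := by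
  by_cases hpq : Int.gcd p q = 0
  · -- p = q = 0, r = ±1
    obtain ⟨hp, hq⟩ := Int.gcd_eq_zero_iff.mp hpq
    have hr : r = 1 ∨ r = -1 := by
      have : Int.gcd (Int.gcd p q) r = r.natAbs := by
        rw [hpq]; simp [Int.gcd]
      rw [this] at h
      omega
    rcases hr with hr | hr
    · exact ⟨1, 0, 0, 0, 1, 0, by subst hp hq hr; ring⟩
    · exact ⟨1, 0, 0, 0, -1, 0, by subst hp hq hr; ring⟩
  · set g : ℤ := ((Int.gcd p q : ℕ) : ℤ) with hg
    have hgpos : 0 < g := by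
      rw [hg]; exact_mod_cast Nat.pos_of_ne_zero hpq
    have hdp : g ∣ p := Int.gcd_dvd_left _ _
    have hdq : g ∣ q := Int.gcd_dvd_right _ _
    -- Bezout for p/g, q/g
    have hb1 : p * Int.gcdA p q + q * Int.gcdB p q = g := (Int.gcd_eq_gcd_ab p q).symm
    -- Bezout for g, r
    have hb2 : g * Int.gcdA g r + r * Int.gcdB g r = ((Int.gcd g r : ℕ) : ℤ) := (Int.gcd_eq_gcd_ab g r).symm
    have hgr : Int.gcd g r = 1 := by simpa [hg] using h
    rw [hgr] at hb2
    norm_num at hb2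
    set x := Int.gcdA p q
    set y := Int.gcdB p q
    set u := Int.gcdA g r
    set w := Int.gcdB g r
    set p1 := p / g with hp1
    set q1 := q / g with hq1
    have hpg : p = g * p1 := (Int.mul_ediv_cancel' hdp).symm
    have hqg : q = g * q1 := (Int.mul_ediv_cancel' hdq).symm
    have hb1' : p1 * x + q1 * y = 1 := by
      have h2 : g * (p1 * x + q1 * y) = g * 1 := by
        rw [mul_one]
        calc g * (p1 * x + q1 * y) = (g*p1) * x + (g*q1) * y := by ring
          _ = p * x + q * y := by rw [← hpg, ← hqg]
          _ = g := hb1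
      exact mul_left_cancel₀ hgpos.ne' h2
    refine ⟨y, -x, 0, w*p1, w*q1, -u, ?_⟩
    linear_combination u * hb1 + r*w*hb1' + hb2


/-! ### Quadratic form infrastructure -/


lemma shift_lemma (A t : ℤ) (hA : 0 < A) : ∃ x : ℤ, (2*(A*x + t))^2 ≤ A^2 := by
  have h0 : A ≠ 0 := hA.ne'
  have hr0 : 0 ≤ t % A := Int.emod_nonneg t h0
  have hrA : t % A < A := Int.emod_lt_of_pos t hA
  have ht : A * (t / A) + t % A = t := Int.mul_ediv_add_emod t A
  by_cases h : 2 * (t % A) ≤ A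
  · refine ⟨-(t / A), ?_⟩
    have hv : A * (-(t / A)) + t = t % A := by linarith
    rw [hv]; nlinarith
  · refine ⟨-(t / A) - 1, ?_⟩
    have hv : A * (-(t / A) - 1) + t = t % A - A := by linarith
    rw [hv]; nlinarith

/-- Every positive binary form attains a value `v` with `3v² ≤ 4·disc`. -/
lemma binary_small : ∀ k : ℕ, ∀ a b c : ℤ, a.natAbs ≤ k → 0 < a →
    (∀ y z : ℤ, ¬(y = 0 ∧ z = 0) → 0 < Q2 a b c y z) →
    1 ≤ a*c - b^2 →
    ∃ y z : ℤ, ¬(y = 0 ∧ z = 0) ∧ 3*(Q2 a b c y z)^2 ≤ 4*(a*c - b^2) := by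
  intro k
  induction k using Nat.strong_induction_on with
  | _ k IH =>
    intro a b c hk ha hpos hΔ
    obtain ⟨y0, hy0⟩ := shift_lemma a b ha
    set V := Q2 a b c y0 1 with hVdef
    have hV1 : 0 < V := hpos y0 1 (by simp)
    have hkey : a * V = (a*y0 + b)^2 + (a*c - b^2) := by
      rw [hVdef]; unfold Q2; ring
    by_cases hlt : V < a
    · -- recurse on transformed form with corner V
      have ha' : (0:ℤ) < V := hV1
      have hpos' : ∀ y z : ℤ, ¬(y = 0 ∧ z = 0) → 0 < Q2 V (-(a*y0+b)) a y z := by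
        intro y z hyz
        have hval : Q2 V (-(a*y0+b)) a y z = Q2 a b c (y0*y - z) y := by
          rw [hVdef]; unfold Q2; ring
        rw [hval]
        apply hpos
        rintro ⟨h1, h2⟩
        refine hyz ⟨h2, ?_⟩
        rw [h2, mul_zero, zero_sub, neg_eq_zero] at h1
        exact h1
      have hΔ' : 1 ≤ V * a - (-(a*y0+b))^2 := by nlinarith [hkey]
      have hk' : V.natAbs < k := by omega
      obtain ⟨y, z, hyz, hb⟩ := IH V.natAbs hk' V (-(a*y0+b)) a le_rfl ha' hpos' hΔ'
      refine ⟨y0*y - z, y, ?_, ?_⟩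
      · rintro ⟨h1, h2⟩
        refine hyz ⟨h2, ?_⟩
        rw [h2, mul_zero, zero_sub, neg_eq_zero] at h1
        exact h1
      · have hval : Q2 V (-(a*y0+b)) a y z = Q2 a b c (y0*y - z) y := by
          rw [hVdef]; unfold Q2; ring
        have hdet : V * a - (-(a*y0+b))^2 = a*c - b^2 := by nlinarith [hkey]
        rw [← hval]; rw [hdet] at hb; exact hb
    · -- corner is small
      push_neg at hlt
      refine ⟨1, 0, by simp, ?_⟩
      have hQ : Q2 a b c 1 0 = a := by unfold Q2; ring
      rw [hQ]
      nlinarith [hy0, hkey, hlt]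

/-- A positive binary form of discriminant 1 represents only sums of two squares. -/
lemma binary_two_squares : ∀ k : ℕ, ∀ a b c n : ℤ, a.natAbs ≤ k →
    (∀ y z : ℤ, ¬(y = 0 ∧ z = 0) → 0 < Q2 a b c y z) →
    a*c - b^2 = 1 →
    (∃ y z : ℤ, Q2 a b c y z = n) →
    ∃ u v : ℤ, n = u^2 + v^2 := by
  intro k
  induction k using Nat.strong_induction_on with
  | _ k IH =>
    intro a b c n hk hpos hdet ⟨Y, Z, hYZ⟩
    have ha : 0 < a := hpos 1 0 (by simp) |>.trans_eq (by unfold Q2; ring)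
    obtain ⟨y0, hy0⟩ := shift_lemma a b ha
    set V := Q2 a b c y0 1 with hVdef
    have hV1 : 0 < V := hpos y0 1 (by simp)
    have hkey : a * V = (a*y0 + b)^2 + (a*c - b^2) := by
      rw [hVdef]; unfold Q2; ring
    by_cases hlt : V < a
    · have hpos' : ∀ y z : ℤ, ¬(y = 0 ∧ z = 0) → 0 < Q2 V (-(a*y0+b)) a y z := by
        intro y z hyz
        have hval : Q2 V (-(a*y0+b)) a y z = Q2 a b c (y0*y - z) y := by
          rw [hVdef]; unfold Q2; ring
        rw [hval]; apply hpos; rintro ⟨h1, h2⟩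
        refine hyz ⟨h2, ?_⟩
        rw [h2, mul_zero, zero_sub, neg_eq_zero] at h1
        exact h1
      have hdet' : V * a - (-(a*y0+b))^2 = 1 := by nlinarith [hkey]
      have hk' : V.natAbs < k := by omega
      apply IH V.natAbs hk' V (-(a*y0+b)) a n le_rfl hpos' hdet'
      -- transport representation: preimage (Z, -Y + y0*Z)
      refine ⟨Z, -Y + y0*Z, ?_⟩
      rw [← hYZ, hVdef]; unfold Q2; ring
    · push_neg at hlt
      have ha1 : a = 1 := by nlinarith [hy0, hkey, hlt, hV1]
      subst ha1
      refine ⟨Y + b*Z, Z, ?_⟩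
      rw [← hYZ]; unfold Q2; linear_combination Z^2 * hdet


set_option maxHeartbeats 3200000 in
/-- Key: a positive ternary form of determinant 1 represents only sums of three squares. -/
lemma ternary_aux : ∀ k : ℕ, ∀ A B C D E F n : ℤ, A.natAbs ≤ k →
    (∀ x y z : ℤ, ¬(x = 0 ∧ y = 0 ∧ z = 0) → 0 < Q3 A B C D E F x y z) →
    det3 A B C D E F = 1 →
    (∃ x y z : ℤ, Q3 A B C D E F x y z = n) →
    ∃ x y z : ℤ, n = x^2 + y^2 + z^2 := by
  intro k
  induction k using Nat.strong_induction_on with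
  | _ k IH =>
    intro A B C D E F n hk hpos hdet ⟨x0, y0, z0, hrep⟩
    have hA : 0 < A := by
      have h := hpos 1 0 0 (by simp)
      have heq : Q3 A B C D E F 1 0 0 = A := by unfold Q3; ring
      rwa [heq] at h
    set a2 : ℤ := A*B - F^2 with ha2def
    set b2 : ℤ := A*D - E*F with hb2def
    set c2 : ℤ := A*C - E^2 with hc2def
    have id1 : ∀ x y z : ℤ, A * Q3 A B C D E F x y z
        = (A*x + F*y + E*z)^2 + Q2 a2 b2 c2 y z := by
      intro x y z; rw [ha2def, hb2def, hc2def]; unfold Q3 Q2; ring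
    have hdetu : A*B*C + 2*D*E*F - A*D^2 - B*E^2 - C*F^2 = 1 := hdet
    have hqdet : a2*c2 - b2^2 = A := by
      rw [ha2def, hb2def, hc2def]; linear_combination A * hdetu
    have hqpos : ∀ y z : ℤ, ¬(y = 0 ∧ z = 0) → 0 < Q2 a2 b2 c2 y z := by
      intro y z hyz
      have hnz : ¬(-(F*y+E*z) = 0 ∧ A*y = 0 ∧ A*z = 0) := by
        rintro ⟨h1, h2, h3⟩
        refine hyz ⟨?_, ?_⟩
        · rcases mul_eq_zero.mp h2 with h | h
          · exact absurd h hA.ne'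
          · exact h
        · rcases mul_eq_zero.mp h3 with h | h
          · exact absurd h hA.ne'
          · exact h
      have hV := hpos _ _ _ hnz
      have hid : A^2 * Q2 a2 b2 c2 y z
          = A * Q3 A B C D E F (-(F*y+E*z)) (A*y) (A*z) := by
        rw [ha2def, hb2def, hc2def]; unfold Q2 Q3; ring
      nlinarith [mul_pos hA hV, sq_nonneg A, hA]
    have ha2 : 0 < a2 := by
      have h := hqpos 1 0 (by simp)
      have heq : Q2 a2 b2 c2 1 0 = a2 := by unfold Q2; ring
      rwa [heq] at h
    have hΔq : 1 ≤ a2*c2 - b2^2 := by rw [hqdet]; exact hA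
    obtain ⟨y1, z1, hyz1, hsmall⟩ := binary_small a2.natAbs a2 b2 c2 le_rfl ha2 hqpos hΔq
    rw [hqdet] at hsmall
    set q1 : ℤ := Q2 a2 b2 c2 y1 z1 with hq1def
    have hq1pos : 0 < q1 := hqpos y1 z1 hyz1
    obtain ⟨x1, hx1⟩ := shift_lemma A (F*y1+E*z1) hA
    set V : ℤ := Q3 A B C D E F x1 y1 z1 with hVdef
    have hVnz : ¬(x1 = 0 ∧ y1 = 0 ∧ z1 = 0) := by
      rintro ⟨h1, h2, h3⟩; exact hyz1 ⟨h2, h3⟩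
    have hVpos : 0 < V := hpos _ _ _ hVnz
    have hkeyV : A * V = (A*x1 + F*y1 + E*z1)^2 + q1 := id1 x1 y1 z1
    by_cases hlt : V < A
    · -- descent step
      obtain ⟨g, p, q, r, hg, hxg, hyg, hzg, hprim⟩ := exists_primitive x1 y1 z1 hVnz
      have hprimnz : ¬(p = 0 ∧ q = 0 ∧ r = 0) := by
        rintro ⟨rfl, rfl, rfl⟩
        simp [Int.gcd] at hprim
      have hA'pos : 0 < Q3 A B C D E F p q r := hpos p q r hprimnz
      have hscale : V = g^2 * Q3 A B C D E F p q r := by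
        rw [hVdef, hxg, hyg, hzg]; unfold Q3; ring
      have hg2 : 1 ≤ g^2 := by nlinarith [hg]
      have hQV : Q3 A B C D E F p q r ≤ V := by
        nlinarith [mul_nonneg (sub_nonneg.mpr hg2) hA'pos.le, hscale]
      have hA'lt : Q3 A B C D E F p q r < A := lt_of_le_of_lt hQV hlt
      obtain ⟨v1, v2, v3, w1, w2, w3, hU⟩ := completion3 p q r hprim
      have hk' : (Q3 A B C D E F p q r).natAbs < k := by omega
      have hdet' : det3 (Q3 A B C D E F p q r) (Q3 A B C D E F v1 v2 v3)
          (Q3 A B C D E F w1 w2 w3) (B3 A B C D E F v1 v2 v3 w1 w2 w3)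
          (B3 A B C D E F p q r w1 w2 w3) (B3 A B C D E F p q r v1 v2 v3) = 1 := by
        rw [transform_det3, hU, hdet]; ring
      have hpos' : ∀ s t u : ℤ, ¬(s = 0 ∧ t = 0 ∧ u = 0) →
          0 < Q3 (Q3 A B C D E F p q r) (Q3 A B C D E F v1 v2 v3)
            (Q3 A B C D E F w1 w2 w3) (B3 A B C D E F v1 v2 v3 w1 w2 w3)
            (B3 A B C D E F p q r w1 w2 w3) (B3 A B C D E F p q r v1 v2 v3) s t u := by
        intro s t u hstu
        rw [transform_Q3 A B C D E F p q r v1 v2 v3 w1 w2 w3 s t u]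
        apply hpos
        rintro ⟨h1, h2, h3⟩
        apply hstu
        have hs : (v2*w3-v3*w2)*(p*s+v1*t+w1*u) - (v1*w3-v3*w1)*(q*s+v2*t+w2*u)
            + (v1*w2-v2*w1)*(r*s+v3*t+w3*u)
            = (p*(v2*w3-v3*w2) - q*(v1*w3-v3*w1) + r*(v1*w2-v2*w1)) * s := by ring
        have ht : -(q*w3-r*w2)*(p*s+v1*t+w1*u) + (p*w3-r*w1)*(q*s+v2*t+w2*u)
            - (p*w2-q*w1)*(r*s+v3*t+w3*u)
            = (p*(v2*w3-v3*w2) - q*(v1*w3-v3*w1) + r*(v1*w2-v2*w1)) * t := by ring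
        have hu : (q*v3-r*v2)*(p*s+v1*t+w1*u) - (p*v3-r*v1)*(q*s+v2*t+w2*u)
            + (p*v2-q*v1)*(r*s+v3*t+w3*u)
            = (p*(v2*w3-v3*w2) - q*(v1*w3-v3*w1) + r*(v1*w2-v2*w1)) * u := by ring
        rw [h1, h2, h3, hU] at hs ht hu
        refine ⟨by linarith [hs], by linarith [ht], by linarith [hu]⟩
      have hrep' : ∃ x y z : ℤ, Q3 (Q3 A B C D E F p q r) (Q3 A B C D E F v1 v2 v3)
          (Q3 A B C D E F w1 w2 w3) (B3 A B C D E F v1 v2 v3 w1 w2 w3)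
          (B3 A B C D E F p q r w1 w2 w3) (B3 A B C D E F p q r v1 v2 v3) x y z = n := by
        refine ⟨(v2*w3-v3*w2)*x0 - (v1*w3-v3*w1)*y0 + (v1*w2-v2*w1)*z0,
          -(q*w3-r*w2)*x0 + (p*w3-r*w1)*y0 - (p*w2-q*w1)*z0,
          (q*v3-r*v2)*x0 - (p*v3-r*v1)*y0 + (p*v2-q*v1)*z0, ?_⟩
        rw [transform_Q3 A B C D E F p q r v1 v2 v3 w1 w2 w3]
        have e1 : p*((v2*w3-v3*w2)*x0 - (v1*w3-v3*w1)*y0 + (v1*w2-v2*w1)*z0)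
            + v1*(-(q*w3-r*w2)*x0 + (p*w3-r*w1)*y0 - (p*w2-q*w1)*z0)
            + w1*((q*v3-r*v2)*x0 - (p*v3-r*v1)*y0 + (p*v2-q*v1)*z0)
            = (p*(v2*w3-v3*w2) - q*(v1*w3-v3*w1) + r*(v1*w2-v2*w1)) * x0 := by ring
        have e2 : q*((v2*w3-v3*w2)*x0 - (v1*w3-v3*w1)*y0 + (v1*w2-v2*w1)*z0)
            + v2*(-(q*w3-r*w2)*x0 + (p*w3-r*w1)*y0 - (p*w2-q*w1)*z0)
            + w2*((q*v3-r*v2)*x0 - (p*v3-r*v1)*y0 + (p*v2-q*v1)*z0)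
            = (p*(v2*w3-v3*w2) - q*(v1*w3-v3*w1) + r*(v1*w2-v2*w1)) * y0 := by ring
        have e3 : r*((v2*w3-v3*w2)*x0 - (v1*w3-v3*w1)*y0 + (v1*w2-v2*w1)*z0)
            + v3*(-(q*w3-r*w2)*x0 + (p*w3-r*w1)*y0 - (p*w2-q*w1)*z0)
            + w3*((q*v3-r*v2)*x0 - (p*v3-r*v1)*y0 + (p*v2-q*v1)*z0)
            = (p*(v2*w3-v3*w2) - q*(v1*w3-v3*w1) + r*(v1*w2-v2*w1)) * z0 := by ring
        rw [e1, e2, e3, hU]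
        simpa using hrep
      exact IH (Q3 A B C D E F p q r).natAbs hk' _ _ _ _ _ _ n le_rfl hpos' hdet' hrep'
    · -- minimal case : A = 1
      push_neg at hlt
      have h3A : 3*A^2 ≤ 4*q1 := by nlinarith [hkeyV, hx1, hlt, hVpos]
      have hA1 : A = 1 := by nlinarith [hsmall, h3A, hq1pos, hA]
      have hfin : Q2 a2 b2 c2 y0 z0 = n - (x0 + F*y0 + E*z0)^2 := by
        have h := id1 x0 y0 z0
        rw [hrep, hA1] at h
        linear_combination -h
      rw [hA1] at hqdet
      obtain ⟨u, v, huv⟩ := binary_two_squares a2.natAbs a2 b2 c2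
        (n - (x0 + F*y0 + E*z0)^2) le_rfl hqpos hqdet ⟨y0, z0, hfin⟩
      exact ⟨x0 + F*y0 + E*z0, u, v, by linarith⟩

lemma one_le_sq {y : ℤ} (h : y ≠ 0) : 1 ≤ y^2 := by
  rcases lt_or_gt_of_ne h with h' | h' <;> nlinarith

/-- The matrix construction: given a suitable auxiliary prime, `N₀` is a sum of three squares. -/
lemma construct_three_squares (N₀ p : ℕ) (hN₀ : 0 < N₀) (hp : 0 < p)
    (hdvd : ((N₀:ℤ)) ∣ (p:ℤ) + 1) (hsq : ∃ F : ℤ, ((p:ℤ)) ∣ F^2 + (N₀:ℤ)) :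
    ∃ x y z : ℤ, ((N₀:ℤ)) = x^2 + y^2 + z^2 := by
  obtain ⟨F, hF⟩ := hsq
  set n : ℤ := (N₀ : ℤ) with hn
  set P : ℤ := (p : ℤ) with hP
  have hnpos : 0 < n := by rw [hn]; exact_mod_cast hN₀
  have hPpos : 0 < P := by rw [hP]; exact_mod_cast hp
  obtain ⟨m, hm⟩ : ∃ m : ℤ, P + 1 = n * m := hdvd
  obtain ⟨E, hE⟩ : ∃ E : ℤ, F^2 + n = P * E := hF
  have hl' : n * (E * m - 1) = F^2 + E := by linear_combination -E * hm - hE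
  set l : ℤ := E * m - 1 with hldef
  have hl : F^2 + E = n * l := hl'.symm
  have hme : n * (m * E) = n * (1 + l) := by linear_combination (-E) * hm - hE + hl
  have hme' : m * E = 1 + l := mul_left_cancel₀ hnpos.ne' hme
  have hdet : det3 n m l 0 (-F) 1 = 1 := by
    unfold det3; linear_combination (-m) * hl + hme'
  have key : ∀ x y z : ℤ, n*P*(Q3 n m l 0 (-F) 1 x y z)
      = P*(n*x + y - F*z)^2 + (P*y + F*z)^2 + n*z^2 := by
    intro x y z; unfold Q3
    linear_combination (-(P*y^2)) * hm + (-(P*z^2)) * hl + (-(z^2)) * hE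
  have hpos : ∀ x y z : ℤ, ¬(x = 0 ∧ y = 0 ∧ z = 0) → 0 < Q3 n m l 0 (-F) 1 x y z := by
    intro x y z h0
    have hkey := key x y z
    have h1 : 0 ≤ P*(n*x + y - F*z)^2 := by positivity
    have h2 : 0 ≤ (P*y + F*z)^2 := sq_nonneg _
    have h3 : 0 ≤ n*z^2 := by positivity
    have hS : 0 < P*(n*x + y - F*z)^2 + (P*y + F*z)^2 + n*z^2 := by
      rcases eq_or_ne z 0 with rfl | hz
      · rcases eq_or_ne y 0 with rfl | hy
        · have hx : x ≠ 0 := fun hxx => h0 ⟨hxx, rfl, rfl⟩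
          have h4 : 0 < P*(n*x + 0 - F*0)^2 := by
            have : n*x + 0 - F*0 = n*x := by ring
            rw [this]
            exact mul_pos hPpos (by positivity)
          nlinarith [h4]
        · have h4 : P*y + F*0 ≠ 0 := by
            simpa using mul_ne_zero hPpos.ne' hy
          have h5 : 0 < (P*y + F*0)^2 := by positivity
          nlinarith [h5]
      · have h4 : 0 < n*z^2 := mul_pos hnpos (by positivity)
        nlinarith [h4]
    rcases le_or_gt (Q3 n m l 0 (-F) 1 x y z) 0 with hle | hgt
    · exfalso
      have hnp : 0 ≤ n*P := (mul_pos hnpos hPpos).le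
      nlinarith [mul_nonpos_of_nonneg_of_nonpos hnp hle]
    · exact hgt
  have hrep : Q3 n m l 0 (-F) 1 1 0 0 = n := by unfold Q3; ring
  exact ternary_aux n.natAbs n m l 0 (-F) 1 n le_rfl hpos hdet ⟨1, 0, 0, hrep⟩

/-- Finding the auxiliary prime via Dirichlet + quadratic reciprocity. -/
lemma exists_good_prime (N₀ n' ε : ℕ) (hodd : n' % 2 = 1)
    (hcase : (N₀ = n' ∧ n' % 4 = 1 ∧ ε = 1) ∨
             (N₀ = 2*n' ∧ ((n' % 4 = 1 ∧ ε = 1) ∨ (n' % 4 = 3 ∧ ε = 5)))) :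
    ∃ p : ℕ, 0 < p ∧ ((N₀:ℤ)) ∣ (p:ℤ) + 1 ∧ ∃ F : ℤ, ((p:ℤ)) ∣ F^2 + (N₀:ℤ) := by
  have hn'pos : 0 < n' := by omega
  have hε15 : ε = 1 ∨ ε = 5 := by
    rcases hcase with ⟨_, _, h⟩ | ⟨_, ⟨_, h⟩ | ⟨_, h⟩⟩
    · exact Or.inl h
    · exact Or.inl h
    · exact Or.inr h
  have hN₀pos : 0 < N₀ := by
    rcases hcase with ⟨h, _, _⟩ | ⟨h, _⟩ <;> omega
  set M : ℕ := 8 * n' with hM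
  haveI hM0 : NeZero M := ⟨by omega⟩
  set c : ℕ := (ε + 1) * n'^2 - 1 with hc
  have hcn : c + 1 = (ε + 1) * n'^2 := by
    have h3 : 0 < (ε+1) * n'^2 := by positivity
    omega
  have hn'sq : n'^2 % 8 = 1 := by
    obtain ⟨j, rfl⟩ : ∃ j, n' = 2*j+1 := ⟨n'/2, by omega⟩
    obtain ⟨t, ht⟩ := Nat.even_mul_succ_self j
    have h2 : (2*j+1)^2 = 4*(j*(j+1)) + 1 := by ring
    rw [h2, ht]; omega
  have hcmod8 : c % 8 = ε := by
    obtain ⟨k, hk⟩ : ∃ k, n'^2 = 8*k+1 := ⟨n'^2/8, by omega⟩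
    rcases hε15 with rfl | rfl <;> omega
  have hcodd : c % 2 = 1 := by omega
  have hcop : Nat.Coprime c M := by
    have h8 : Nat.Coprime c 8 := by
      have h2 : Nat.Coprime c 2 := ((Nat.prime_two.coprime_iff_not_dvd).mpr (by omega)).symm
      have : Nat.Coprime c (2^3) := h2.pow_right 3
      simpa using this
    have hn : Nat.Coprime c n' := by
      have h1 : Nat.gcd c n' ∣ c := Nat.gcd_dvd_left _ _
      have h2 : Nat.gcd c n' ∣ n' := Nat.gcd_dvd_right _ _
      have h3 : Nat.gcd c n' ∣ c + 1 := by
        rw [hcn]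
        exact Dvd.dvd.mul_left (h2.trans (dvd_pow_self n' two_ne_zero)) _
      have h4 : Nat.gcd c n' ∣ 1 := by
        have := Nat.dvd_sub h3 h1
        simpa using this
      exact Nat.dvd_one.mp h4
    exact (Nat.coprime_mul_iff_right).mpr ⟨h8, hn⟩
  have hu : IsUnit ((c : ZMod M)) := ⟨ZMod.unitOfCoprime c hcop, ZMod.coe_unitOfCoprime c hcop⟩
  obtain ⟨p, hpgt, hpp, hpc⟩ := Nat.forall_exists_prime_gt_and_eq_mod hu (max 8 N₀)
  have hmodM : p % M = c % M := (ZMod.natCast_eq_natCast_iff' p c M).mp hpc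
  have h8dvd : (8:ℕ) ∣ M := Dvd.intro n' rfl
  have hn'dvd : n' ∣ M := dvd_mul_left n' 8
  have hp8 : p % 8 = ε := by
    have h1 : p % 8 = c % 8 := Nat.ModEq.of_dvd h8dvd hmodM
    omega
  have hpodd : p % 2 = 1 := by rcases hε15 with rfl | rfl <;> omega
  have hp4 : p % 4 = 1 := by rcases hε15 with rfl | rfl <;> omega
  have hn'c1 : n' ∣ c + 1 := by
    rw [hcn]
    exact Dvd.dvd.mul_left (dvd_pow_self n' two_ne_zero) _
  have hn'p : n' ∣ p + 1 := by
    have h1 : p ≡ c [MOD n'] := Nat.ModEq.of_dvd hn'dvd hmodM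
    have h3 : (p+1) ≡ (c+1) [MOD n'] := h1.add_right 1
    have h5 : (c+1) ≡ 0 [MOD n'] := Nat.modEq_zero_iff_dvd.mpr hn'c1
    exact Nat.modEq_zero_iff_dvd.mp (h3.trans h5)
  have hN₀pnat : N₀ ∣ p + 1 := by
    rcases hcase with ⟨hN, _, _⟩ | ⟨hN, _⟩
    · rw [hN]; exact hn'p
    · rw [hN]
      have h2 : (2:ℕ) ∣ p + 1 := by omega
      have hco : Nat.Coprime 2 n' := (Nat.prime_two.coprime_iff_not_dvd).mpr (by omega)
      exact hco.mul_dvd_of_dvd_of_dvd h2 hn'p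
  have hN₀p : (N₀:ℤ) ∣ (p:ℤ) + 1 := by
    have := Int.natCast_dvd_natCast.mpr hN₀pnat
    push_cast at this
    exact this
  haveI : Fact p.Prime := ⟨hpp⟩
  -- the Jacobi symbol computation
  have hoddp : Odd p := Nat.odd_iff.mpr hpodd
  have hoddn' : Odd n' := Nat.odd_iff.mpr hodd
  have hJ1 : jacobiSym (-1) p = 1 := by
    rw [jacobiSym.at_neg_one hoddp, ZMod.χ₄_nat_one_mod_four hp4]
  have hJn' : jacobiSym ((n':ℕ):ℤ) p = jacobiSym ((p:ℕ):ℤ) n' :=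
    (jacobiSym.quadratic_reciprocity_one_mod_four hp4 hoddn').symm
  have hmodint : ((p:ℕ):ℤ) % ((n':ℕ):ℤ) = (-1) % ((n':ℕ):ℤ) := by
    have h1 : ((n':ℕ):ℤ) ∣ (-1) - ((p:ℕ):ℤ) := by
      have h2 : ((n':ℕ):ℤ) ∣ ((p:ℕ):ℤ) + 1 := by
        have := Int.natCast_dvd_natCast.mpr hn'p
        push_cast at this
        exact this
      have h3 : (-1 : ℤ) - ((p:ℕ):ℤ) = -(((p:ℕ):ℤ) + 1) := by ring
      rw [h3]
      exact dvd_neg.mpr h2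
    exact Int.modEq_iff_dvd.mpr h1
  have hJpn : jacobiSym ((p:ℕ):ℤ) n' = jacobiSym (-1) n' := jacobiSym.mod_left' hmodint
  have hJm1n' : jacobiSym (-1:ℤ) n' = ZMod.χ₄ n' := jacobiSym.at_neg_one hoddn'
  have hJ : jacobiSym (-((N₀:ℕ):ℤ)) p = 1 := by
    rcases hcase with ⟨hN, h41, hε1⟩ | ⟨hN, hsub⟩
    · subst hN
      rw [show -((N₀:ℕ):ℤ) = -1 * ((N₀:ℕ):ℤ) by ring, jacobiSym.mul_left, hJ1,
        hJn', hJpn, hJm1n', ZMod.χ₄_nat_one_mod_four h41]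
      ring
    · subst hN
      have hcast : -(((2*n' : ℕ)):ℤ) = -1 * (2:ℤ) * ((n':ℕ):ℤ) := by push_cast; ring
      rw [hcast, jacobiSym.mul_left, jacobiSym.mul_left, hJ1, hJn', hJpn, hJm1n',
        jacobiSym.at_two hoddp]
      rw [ZMod.χ₈_nat_eq_if_mod_eight, ZMod.χ₄_nat_eq_if_mod_four]
      rcases hsub with ⟨h41, hε1⟩ | ⟨h43, hε5⟩
      · have e1 : p % 8 = 1 := by omega
        have e2 : p % 2 = 1 := hpodd
        simp [e1, e2, h41, hodd]
      · have e1 : p % 8 = 5 := by omega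
        have e2 : p % 2 = 1 := hpodd
        simp [e1, e2, h43, hodd]
  have hsquare : IsSquare ((-((N₀:ℕ):ℤ) : ℤ) : ZMod p) := ZMod.isSquare_of_jacobiSym_eq_one hJ
  obtain ⟨s, hs⟩ := hsquare
  refine ⟨p, hpp.pos, hN₀p, (s.val : ℤ), ?_⟩
  have hz : (((s.val:ℤ)^2 + ((N₀:ℕ):ℤ) : ℤ) : ZMod p) = 0 := by
    push_cast
    rw [ZMod.natCast_val, ZMod.cast_id]
    have hs' : ((N₀ : ZMod p)) = -(s*s) := by
      have h := hs
      push_cast at h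
      linear_combination -h
    rw [hs']
    ring
  exact (ZMod.intCast_zmod_eq_zero_iff_dvd _ p).mp hz

/-- Three squares theorem for `N ≡ 1, 2 (mod 4)`. -/
theorem three_squares (N : ℕ) (h4 : N % 4 = 1 ∨ N % 4 = 2) :
    ∃ x y z : ℤ, (N:ℤ) = x^2 + y^2 + z^2 := by
  rcases h4 with h | h
  · obtain ⟨p, hp0, hdvd, hsq⟩ := exists_good_prime N N 1 (by omega) (Or.inl ⟨rfl, h, rfl⟩)
    exact construct_three_squares N p (by omega) hp0 hdvd hsq
  · have hsplit : N = 2 * (N/2) := by omega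
    have hodd : (N/2) % 2 = 1 := by omega
    have h14 : (N/2) % 4 = 1 ∨ (N/2) % 4 = 3 := by omega
    rcases h14 with h14 | h14
    · obtain ⟨p, hp0, hdvd, hsq⟩ := exists_good_prime N (N/2) 1 hodd
        (Or.inr ⟨hsplit, Or.inl ⟨h14, rfl⟩⟩)
      exact construct_three_squares N p (by omega) hp0 hdvd hsq
    · obtain ⟨p, hp0, hdvd, hsq⟩ := exists_good_prime N (N/2) 5 hodd
        (Or.inr ⟨hsplit, Or.inr ⟨h14, rfl⟩⟩)
      exact construct_three_squares N p (by omega) hp0 hdvd hsq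

/-- `K = a² + b² + (c² + c)` for every natural `K`. -/
lemma L1 (K : ℕ) : ∃ a b c : ℤ, (K:ℤ) = a^2 + b^2 + (c^2 + c) := by
  obtain ⟨x, y, z, hxyz⟩ := three_squares (4*K+1) (by omega)
  push_cast at hxyz
  rcases Int.even_or_odd x with ⟨a, rfl⟩ | ⟨a, rfl⟩ <;>
    rcases Int.even_or_odd y with ⟨b, rfl⟩ | ⟨b, rfl⟩ <;>
      rcases Int.even_or_odd z with ⟨c, rfl⟩ | ⟨c, rfl⟩
  · exfalso
    obtain ⟨S, hS⟩ : ∃ S : ℤ, 4*(K:ℤ)+1 = 4*S + 0 :=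
      ⟨a^2+b^2+c^2, by linear_combination hxyz⟩
    omega
  · refine ⟨a, b, c, ?_⟩
    have h : 4*((K:ℤ) - (a^2 + b^2 + (c^2+c))) = 0 := by linear_combination hxyz
    linarith
  · refine ⟨a, c, b, ?_⟩
    have h : 4*((K:ℤ) - (a^2 + c^2 + (b^2+b))) = 0 := by linear_combination hxyz
    linarith
  · exfalso
    obtain ⟨S, hS⟩ : ∃ S : ℤ, 4*(K:ℤ)+1 = 4*S + 2 :=
      ⟨a^2+b^2+b+c^2+c, by linear_combination hxyz⟩
    omega
  · refine ⟨b, c, a, ?_⟩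
    have h : 4*((K:ℤ) - (b^2 + c^2 + (a^2+a))) = 0 := by linear_combination hxyz
    linarith
  · exfalso
    obtain ⟨S, hS⟩ : ∃ S : ℤ, 4*(K:ℤ)+1 = 4*S + 2 :=
      ⟨a^2+a+b^2+c^2+c, by linear_combination hxyz⟩
    omega
  · exfalso
    obtain ⟨S, hS⟩ : ∃ S : ℤ, 4*(K:ℤ)+1 = 4*S + 2 :=
      ⟨a^2+a+b^2+b+c^2, by linear_combination hxyz⟩
    omega
  · exfalso
    obtain ⟨S, hS⟩ : ∃ S : ℤ, 4*(K:ℤ)+1 = 4*S + 3 :=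
      ⟨a^2+a+b^2+b+c^2+c, by linear_combination hxyz⟩
    omega

/-- `K = a² + (b² + b) + (c² + c)` for every natural `K`. -/
lemma L2 (K : ℕ) : ∃ a b c : ℤ, (K:ℤ) = a^2 + (b^2 + b) + (c^2 + c) := by
  obtain ⟨x, y, z, hxyz⟩ := three_squares (4*K+2) (by omega)
  push_cast at hxyz
  rcases Int.even_or_odd x with ⟨a, rfl⟩ | ⟨a, rfl⟩ <;>
    rcases Int.even_or_odd y with ⟨b, rfl⟩ | ⟨b, rfl⟩ <;>
      rcases Int.even_or_odd z with ⟨c, rfl⟩ | ⟨c, rfl⟩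
  · exfalso
    obtain ⟨S, hS⟩ : ∃ S : ℤ, 4*(K:ℤ)+2 = 4*S + 0 :=
      ⟨a^2+b^2+c^2, by linear_combination hxyz⟩
    omega
  · exfalso
    obtain ⟨S, hS⟩ : ∃ S : ℤ, 4*(K:ℤ)+2 = 4*S + 1 :=
      ⟨a^2+b^2+c^2+c, by linear_combination hxyz⟩
    omega
  · exfalso
    obtain ⟨S, hS⟩ : ∃ S : ℤ, 4*(K:ℤ)+2 = 4*S + 1 :=
      ⟨a^2+b^2+b+c^2, by linear_combination hxyz⟩
    omega
  · refine ⟨a, b, c, ?_⟩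
    have h : 4*((K:ℤ) - (a^2 + (b^2+b) + (c^2+c))) = 0 := by linear_combination hxyz
    linarith
  · exfalso
    obtain ⟨S, hS⟩ : ∃ S : ℤ, 4*(K:ℤ)+2 = 4*S + 1 :=
      ⟨a^2+a+b^2+c^2, by linear_combination hxyz⟩
    omega
  · refine ⟨b, a, c, ?_⟩
    have h : 4*((K:ℤ) - (b^2 + (a^2+a) + (c^2+c))) = 0 := by linear_combination hxyz
    linarith
  · refine ⟨c, a, b, ?_⟩
    have h : 4*((K:ℤ) - (c^2 + (a^2+a) + (b^2+b))) = 0 := by linear_combination hxyz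
    linarith
  · exfalso
    obtain ⟨S, hS⟩ : ∃ S : ℤ, 4*(K:ℤ)+2 = 4*S + 3 :=
      ⟨a^2+a+b^2+b+c^2+c, by linear_combination hxyz⟩
    omega

/-! ### Polygonal number arithmetic -/

def tri (x : ℤ) : ℤ := x*(x-1)/2

lemma two_tri (x : ℤ) : 2 * tri x = x*(x-1) := by
  obtain ⟨t, ht⟩ : Even (x*(x-1)) := by
    have h := Int.even_mul_succ_self (x-1)
    have h2 : (x-1)*(x-1+1) = x*(x-1) := by ring
    rwa [h2] at h
  unfold tri
  omega

lemma polygonal_eq (m : ℕ) (x : ℤ) : polygonal m x = ((m:ℤ)-2) * tri x + x := by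
  unfold polygonal
  have h1 : ((m:ℤ)-2)*x^2 - ((m:ℤ)-4)*x = 2*(((m:ℤ)-2) * tri x + x) := by
    linear_combination (-((m:ℤ)-2)) * two_tri x
  rw [h1, Int.mul_ediv_cancel_left _ two_ne_zero]

lemma tri_zero : tri 0 = 0 := by norm_num [tri]
lemma tri_one : tri 1 = 0 := by norm_num [tri]

lemma polygonal_zero (m : ℕ) : polygonal m 0 = 0 := by
  rw [polygonal_eq, tri_zero]; ring

lemma polygonal_one (m : ℕ) : polygonal m 1 = 1 := by
  rw [polygonal_eq, tri_one]; ring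

lemma tri_pair (a : ℤ) : tri a + tri (-a) = a^2 := by
  have h : 2*(tri a + tri (-a)) = 2*(a^2) := by
    linear_combination two_tri a + two_tri (-a)
  exact mul_left_cancel₀ two_ne_zero h

lemma tri_pairP (c : ℤ) : tri (c+1) + tri (-c) = c^2 + c := by
  have h : 2*(tri (c+1) + tri (-c)) = 2*(c^2 + c) := by
    linear_combination two_tri (c+1) + two_tri (-c)
  exact mul_left_cancel₀ two_ne_zero h

lemma tri_pairN (c : ℤ) : tri c + tri (-c-1) = c^2 + c + 1 := by
  have h : 2*(tri c + tri (-c-1)) = 2*(c^2 + c + 1) := by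
    linear_combination two_tri c + two_tri (-c-1)
  exact mul_left_cancel₀ two_ne_zero h

lemma tri_pairN2 (w : ℤ) : tri (w-1) + tri (-w-1) = w^2 + 2 := by
  have h : 2*(tri (w-1) + tri (-w-1)) = 2*(w^2 + 2) := by
    linear_combination two_tri (w-1) + two_tri (-w-1)
  exact mul_left_cancel₀ two_ne_zero h

lemma rep_sum (m : ℕ) (t : ℕ) :
    ((List.replicate t (1:ℤ)).map (polygonal m)).sum = (t:ℤ) := by
  induction t with
  | zero => simp
  | succ n ih =>
    rw [List.replicate_succ]
    simp only [List.map_cons, List.sum_cons, ih, polygonal_one]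
    push_cast
    ring

lemma sum_getD (m : ℕ) : ∀ (n : ℕ) (L : List ℤ), L.length ≤ n →
    (∑ j : Fin n, polygonal m (L.getD (j:ℕ) 0)) = (L.map (polygonal m)).sum := by
  intro n
  induction n with
  | zero =>
    intro L hL
    have h : L = [] := List.eq_nil_of_length_eq_zero (by omega)
    subst h
    simp
  | succ n ih =>
    intro L hL
    cases L with
    | nil =>
      simp [polygonal_zero]
    | cons a tl =>
      rw [Fin.sum_univ_succ]
      have h0 : ((a :: tl).getD ((0 : Fin (n+1)):ℕ) 0) = a := by simp
      have hs : ∀ j : Fin n, ((a :: tl).getD ((j.succ : Fin (n+1)):ℕ) 0) = tl.getD (j:ℕ) 0 := by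
        intro j
        simp
      rw [h0]
      simp only [hs]
      rw [ih tl (by simpa using hL)]
      simp

end SplitUniversalAux

open SplitUniversalAux in
theorem split_universal (r m : ℕ) (hr : 7 ≤ r) (hrm : r < m - 3) (k1 : ℕ) (k3 : ℤ)
    (hk3l : -5 ≤ k3) (hk3u : k3 ≤ (r : ℤ) - 6) (hpos : 0 ≤ (k1 : ℤ) * ((m : ℤ) - 2) + k3)
    (hne : ¬ (-5 ≤ k3 ∧ k3 ≤ -1 ∧ (k1 : ℤ) ≤ |k3| - 1)) :
    ∃ x : Fin (r - 1) → ℤ,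
      ∑ j, polygonal m (x j) = (k1 : ℤ) * ((m : ℤ) - 2) + k3 := by
  classical
  by_cases hk3 : 1 ≤ k3
  · -- k3 ≥ 1 : pairs (a,-a), (c+1,-c), (b,-b) plus (k3-1) ones
    obtain ⟨a, b, c, habc⟩ := L1 k1
    have ht0 : 0 ≤ k3 - 1 := by omega
    have htz : (((k3 - 1).toNat : ℕ) : ℤ) = k3 - 1 := Int.toNat_of_nonneg ht0
    set t : ℕ := (k3 - 1).toNat with htdef
    set L : List ℤ := [a, -a, c+1, -c, b, -b] ++ List.replicate t 1 with hLdef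
    have hlen : L.length ≤ r - 1 := by
      rw [hLdef]
      simp only [List.length_append, List.length_cons, List.length_nil, List.length_replicate]
      omega
    refine ⟨fun j => L.getD (j:ℕ) 0, ?_⟩
    rw [sum_getD m (r-1) L hlen, hLdef]
    rw [List.map_append, List.sum_append, rep_sum]
    simp only [List.map_cons, List.map_nil, List.sum_cons, List.sum_nil, polygonal_eq]
    linear_combination ((m:ℤ)-2) * tri_pair a + ((m:ℤ)-2) * tri_pairP c
      + ((m:ℤ)-2) * tri_pair b - ((m:ℤ)-2) * habc + htz
  · have hk30 : k3 ≤ 0 := by omega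
    -- helper to finish a six-element list case
    have main : ∀ (L : List ℤ), L.length = 6 →
        (L.map (polygonal m)).sum = (k1 : ℤ) * ((m : ℤ) - 2) + k3 →
        ∃ x : Fin (r - 1) → ℤ,
          ∑ j, polygonal m (x j) = (k1 : ℤ) * ((m : ℤ) - 2) + k3 := by
      intro L hL6 hsum
      refine ⟨fun j => L.getD (j:ℕ) 0, ?_⟩
      rw [sum_getD m (r-1) L (by omega), hsum]
    interval_cases k3
    · -- k3 = -5
      have hk15 : 5 ≤ k1 := by
        have hC : ¬ ((k1:ℤ) ≤ |(-5:ℤ)| - 1) := fun hc => hne ⟨by norm_num, by norm_num, hc⟩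
        norm_num at hC
        exact_mod_cast hC
      obtain ⟨a, b, c, habc⟩ := L1 (k1 - 5)
      have habc' : (k1:ℤ) - 5 = a^2 + b^2 + (c^2 + c) := by
        rw [← habc]; push_cast [hk15]; ring
      apply main [a-1, -a-1, b-1, -b-1, c, -c-1] (by simp)
      simp only [List.map_cons, List.map_nil, List.sum_cons, List.sum_nil, polygonal_eq]
      linear_combination ((m:ℤ)-2) * tri_pairN2 a + ((m:ℤ)-2) * tri_pairN2 b
        + ((m:ℤ)-2) * tri_pairN c - ((m:ℤ)-2) * habc'
    · -- k3 = -4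
      have hk14 : 4 ≤ k1 := by
        have hC : ¬ ((k1:ℤ) ≤ |(-4:ℤ)| - 1) := fun hc => hne ⟨by norm_num, by norm_num, hc⟩
        norm_num at hC
        exact_mod_cast hC
      obtain ⟨a, b, c, habc⟩ := L2 (k1 - 4)
      have habc' : (k1:ℤ) - 4 = a^2 + (b^2 + b) + (c^2 + c) := by
        rw [← habc]; push_cast [hk14]; ring
      apply main [a-1, -a-1, b, -b-1, c, -c-1] (by simp)
      simp only [List.map_cons, List.map_nil, List.sum_cons, List.sum_nil, polygonal_eq]
      linear_combination ((m:ℤ)-2) * tri_pairN2 a + ((m:ℤ)-2) * tri_pairN b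
        + ((m:ℤ)-2) * tri_pairN c - ((m:ℤ)-2) * habc'
    · -- k3 = -3
      have hk13 : 3 ≤ k1 := by
        have hC : ¬ ((k1:ℤ) ≤ |(-3:ℤ)| - 1) := fun hc => hne ⟨by norm_num, by norm_num, hc⟩
        norm_num at hC
        exact_mod_cast hC
      obtain ⟨a, b, c, habc⟩ := L1 (k1 - 3)
      have habc' : (k1:ℤ) - 3 = a^2 + b^2 + (c^2 + c) := by
        rw [← habc]; push_cast [hk13]; ring
      apply main [a, -a, b-1, -b-1, c, -c-1] (by simp)
      simp only [List.map_cons, List.map_nil, List.sum_cons, List.sum_nil, polygonal_eq]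
      linear_combination ((m:ℤ)-2) * tri_pair a + ((m:ℤ)-2) * tri_pairN2 b
        + ((m:ℤ)-2) * tri_pairN c - ((m:ℤ)-2) * habc'
    · -- k3 = -2
      have hk12 : 2 ≤ k1 := by
        have hC : ¬ ((k1:ℤ) ≤ |(-2:ℤ)| - 1) := fun hc => hne ⟨by norm_num, by norm_num, hc⟩
        norm_num at hC
        exact_mod_cast hC
      obtain ⟨a, b, c, habc⟩ := L2 (k1 - 2)
      have habc' : (k1:ℤ) - 2 = a^2 + (b^2 + b) + (c^2 + c) := by
        rw [← habc]; push_cast [hk12]; ring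
      apply main [a, -a, b, -b-1, c, -c-1] (by simp)
      simp only [List.map_cons, List.map_nil, List.sum_cons, List.sum_nil, polygonal_eq]
      linear_combination ((m:ℤ)-2) * tri_pair a + ((m:ℤ)-2) * tri_pairN b
        + ((m:ℤ)-2) * tri_pairN c - ((m:ℤ)-2) * habc'
    · -- k3 = -1
      have hk11 : 1 ≤ k1 := by
        have hC : ¬ ((k1:ℤ) ≤ |(-1:ℤ)| - 1) := fun hc => hne ⟨by norm_num, by norm_num, hc⟩
        norm_num at hC
        omega
      obtain ⟨a, b, c, habc⟩ := L1 (k1 - 1)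
      have habc' : (k1:ℤ) - 1 = a^2 + b^2 + (c^2 + c) := by
        rw [← habc]; push_cast [hk11]; ring
      apply main [a, -a, b, -b, c, -c-1] (by simp)
      simp only [List.map_cons, List.map_nil, List.sum_cons, List.sum_nil, polygonal_eq]
      linear_combination ((m:ℤ)-2) * tri_pair a + ((m:ℤ)-2) * tri_pair b
        + ((m:ℤ)-2) * tri_pairN c - ((m:ℤ)-2) * habc'
    · -- k3 = 0
      rcases Nat.eq_zero_or_pos k1 with rfl | hk11
      · refine ⟨fun _ => 0, ?_⟩
        simp [polygonal_zero]
      · obtain ⟨a, b, c, habc⟩ := L2 (k1 - 1)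
        have habc' : (k1:ℤ) - 1 = a^2 + (b^2 + b) + (c^2 + c) := by
          rw [← habc]; push_cast [hk11]; ring
        apply main [a, -a, b+1, -b, c, -c-1] (by simp)
        simp only [List.map_cons, List.map_nil, List.sum_cons, List.sum_nil, polygonal_eq]
        linear_combination ((m:ℤ)-2) * tri_pair a + ((m:ℤ)-2) * tri_pairP b
          + ((m:ℤ)-2) * tri_pairN c - ((m:ℤ)-2) * habc'
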